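/- Let p, q ∈ AP be distinct, let I be an interval of nonnegative reals, and let c be a real with inf I < c < sup I. Let f be the signal with f(t) = {p} for t ∈ [0,c] and f(t) = {q} for t > c. Then, under the NEW satisfaction relation ⊨: f does not satisfy p U_I q, and f does satisfy (¬p) R_I (¬q) (via the third disjunct in the semantics of release). -/

import Mathlib

open scoped NNReal ENNReal
open Set

namespace MITL

/-- A signal assigns to each nonnegative real time the set of atomic
propositions true at that time. -/
abbrev Signal (AP : Type*) := ℝ≥0 → Set AP

/-- The shifted signal `f^r`, defined by `f^r(t) = f(r+t)`. -/
def shift {AP : Type*} (f : Signal AP) (r : ℝ≥0) : Signal AP := fun t => f (r + t)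

/-- MTL formulas over atomic propositions `AP`; the timing constraints are
(intended to be) intervals of nonnegative reals. -/
inductive MTL (AP : Type*) where
  | top : MTL AP
  | bot : MTL AP
  | atom : AP → MTL AP
  | neg : MTL AP → MTL AP
  | disj : MTL AP → MTL AP → MTL AP
  | conj : MTL AP → MTL AP → MTL AP
  | until_ : MTL AP → MTL AP → Set ℝ≥0 → MTL AP
  | release : MTL AP → MTL AP → Set ℝ≥0 → MTL AP

variable {AP : Type*}

/-- The NEW satisfaction relation: `NSat f φ` means `f ⊨ φ`. -/
def NSat : Signal AP → MTL AP → Prop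
  | _, .top => True
  | _, .bot => False
  | f, .atom p => p ∈ f 0
  | f, .neg φ => ¬ NSat f φ
  | f, .disj φ1 φ2 => NSat f φ1 ∨ NSat f φ2
  | f, .conj φ1 φ2 => NSat f φ1 ∧ NSat f φ2
  | f, .until_ φ1 φ2 I =>
      ∃ t1 ∈ I, NSat (shift f t1) φ2 ∧ ∀ t2 ∈ Set.Ioo 0 t1, NSat (shift f t2) φ1
  | f, .release φ1 φ2 I =>
      (∀ t1 ∈ I, NSat (shift f t1) φ2) ∨
      (∃ t1 : ℝ≥0, 0 < t1 ∧ NSat (shift f t1) φ1 ∧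
        ∀ t2 ∈ Set.Ioc 0 t1 ∩ I, NSat (shift f t2) φ2) ∨
      (∃ t1 ∈ I ∪ {sInf I}, ∃ t2 ∈ I, t1 < t2 ∧
        ∀ t3 ∈ I, (t3 ≤ t1 → NSat (shift f t3) φ2) ∧
          (t1 < t3 → t3 ≤ t2 → NSat (shift f t3) φ1))

/-- Finite variability from the right of a signal `f` with respect to a formula
`φ`, relative to a satisfaction relation `Sat`. -/
def FinVarRight (Sat : Signal AP → MTL AP → Prop) (f : Signal AP) (φ : MTL AP) : Prop :=
  ∀ r : ℝ≥0,
    (∀ ε : ℝ≥0, 0 < ε → ∃ t ∈ Set.Ioo r (r + ε), Sat (shift f t) φ) →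
    ∃ ε : ℝ≥0, 0 < ε ∧ ∀ t ∈ Set.Ioo r (r + ε), Sat (shift f t) φ

/-- Finite variability from the left of a signal `f` with respect to a formula
`φ`, relative to a satisfaction relation `Sat`. -/
def FinVarLeft (Sat : Signal AP → MTL AP → Prop) (f : Signal AP) (φ : MTL AP) : Prop :=
  ∀ r : ℝ≥0, 0 < r →
    (∀ ε ∈ Set.Ioo 0 r, ∃ t ∈ Set.Ioo (r - ε) r, Sat (shift f t) φ) →
    ∃ ε ∈ Set.Ioo 0 r, ∀ t ∈ Set.Ioo (r - ε) r, Sat (shift f t) φ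

/-- The supremum of a set of nonnegative reals, computed in `ℝ≥0∞`
(so that sets unbounded above have supremum `∞`). -/
noncomputable def supE (I : Set ℝ≥0) : ℝ≥0∞ := sSup ((fun x : ℝ≥0 => (x : ℝ≥0∞)) '' I)

theorem new_semantics_dual_example (p q : AP) (hpq : p ≠ q)
    (I : Set ℝ≥0) (hI : I.OrdConnected)
    (c : ℝ≥0) (hc1 : sInf I < c) (hc2 : (c : ℝ≥0∞) < supE I)
    (f : Signal AP) (hf : f = fun t => if t ≤ c then ({p} : Set AP) else ({q} : Set AP)) :
    ¬ NSat f (.until_ (.atom p) (.atom q) I) ∧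
    NSat f (.release (.neg (.atom p)) (.neg (.atom q)) I) := by
  subst hf
  set f : Signal AP := fun t => if t ≤ c then ({p} : Set AP) else ({q} : Set AP) with hf
  have hmem : ∀ (x : AP) (t : ℝ≥0),
      NSat (shift f t) (.atom x) ↔ x ∈ (if t ≤ c then ({p} : Set AP) else {q}) := by
    intro x t
    simp [NSat, shift, hf]
  have hne : I.Nonempty := by
    by_contra h
    rw [Set.not_nonempty_iff_eq_empty] at h
    subst h
    simp [supE] at hc2
  obtain ⟨a, haI, hac⟩ := exists_lt_of_csInf_lt hne hc1
  obtain ⟨b, hbI, hcb⟩ : ∃ b ∈ I, c < b := by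
    obtain ⟨y, hy, hcy⟩ := lt_sSup_iff.mp hc2
    obtain ⟨b, hbI, rfl⟩ := hy
    exact ⟨b, hbI, by simpa using hcy⟩
  have hcI : c ∈ I := hI.out haI hbI ⟨hac.le, hcb.le⟩
  constructor
  · rintro ⟨t1, ht1I, hq, hall⟩
    rw [hmem] at hq
    have ht1c : c < t1 := by
      by_contra h
      push_neg at h
      rw [if_pos h] at hq
      exact hpq (Set.mem_singleton_iff.mp hq).symm
    obtain ⟨t2, hct2, ht2t1⟩ := exists_between ht1c
    have h2 := hall t2 ⟨lt_of_le_of_lt (zero_le : (0 : ℝ≥0) ≤ c) hct2, ht2t1⟩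
    rw [hmem, if_neg (not_le.mpr hct2)] at h2
    exact hpq (Set.mem_singleton_iff.mp h2)
  · right; right
    refine ⟨c, Or.inl hcI, b, hbI, hcb, ?_⟩
    intro t3 ht3I
    constructor
    · intro h3c
      show ¬ NSat (shift f t3) (.atom q)
      rw [hmem, if_pos h3c]
      exact fun h => hpq (Set.mem_singleton_iff.mp h).symm
    · intro hc3 _
      show ¬ NSat (shift f t3) (.atom p)
      rw [hmem, if_neg (not_le.mpr hc3)]
      exact fun h => hpq (Set.mem_singleton_iff.mp h)

end MITL
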